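/- Let k be an ordered field in which every non-negative element is a square (a square-ordered field). Then: (i) the quotient group k*/(k*)² has order 2, and every quadratic field extension of k is isomorphic to ℓ = k(√−1); (ii) the norm map ℓ* → k*, x ↦ x·σ(x), is not surjective, and −1 is not of the form x·σ(x) for any x ∈ ℓ; (iii) a triple c = (c₁, c₂, c₃) ∈ k³ is ℓ-admissible if and only if c₁ > 1/2 and c₃ < c₂ < −c₃. -/

import Mathlib

open Module Function

variable {k : Type}

/-- The function `q_c : ℓ × ℓ → ℓ` associated with a triple `c = (c₁, c₂, c₃) ∈ k³`. -/
def qc [Field k] {ℓ : Type} [Field ℓ] [Algebra k ℓ] (σ : ℓ ≃ₐ[k] ℓ) (c : k × k × k)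
    (x y : ℓ) : ℓ :=
  (1 - algebraMap k ℓ c.1) * x ^ 2 + algebraMap k ℓ c.1 * (x * σ x)
    - algebraMap k ℓ c.2.1 * y ^ 2 - algebraMap k ℓ c.2.2 * (y * σ y)

/-- A triple `c ∈ k³` is `ℓ`-admissible if `q_c` is anisotropic. -/
def IsAdmissibleTriple [Field k] {ℓ : Type} [Field ℓ] [Algebra k ℓ] (σ : ℓ ≃ₐ[k] ℓ)
    (c : k × k × k) : Prop :=
  ∀ x y : ℓ, qc σ c x y = 0 → x = 0 ∧ y = 0

section Aux

variable [Field k] [LinearOrder k] [IsStrictOrderedRing k] {ℓ : Type} [Field ℓ] [Algebra k ℓ]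

/-- Linear independence of `1` and `i` over `k`, in coefficient form. -/
lemma indep_aux (i : ℓ) (hi : i ^ 2 = -1) {a b : k}
    (h : algebraMap k ℓ a + algebraMap k ℓ b * i = 0) : a = 0 ∧ b = 0 := by
  have e : algebraMap k ℓ a = -(algebraMap k ℓ b * i) := eq_neg_of_add_eq_zero_left h
  have key : algebraMap k ℓ (a ^ 2 + b ^ 2) = 0 := by
    rw [map_add, map_pow, map_pow, e]
    linear_combination (algebraMap k ℓ b) ^ 2 * hi
  have hk : a ^ 2 + b ^ 2 = 0 := by
    apply (algebraMap k ℓ).injective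
    rw [key, map_zero]
  constructor
  · have : a ^ 2 = 0 := by nlinarith [sq_nonneg a, sq_nonneg b]
    exact pow_eq_zero_iff (two_ne_zero) |>.1 this
  · have : b ^ 2 = 0 := by nlinarith [sq_nonneg a, sq_nonneg b]
    exact pow_eq_zero_iff (two_ne_zero) |>.1 this

/-- Every element of `ℓ` can be written as `a + b·i`. -/
lemma repr_aux (hquad : finrank k ℓ = 2) (i : ℓ) (hi : i ^ 2 = -1) (z : ℓ) :
    ∃ a b : k, z = algebraMap k ℓ a + algebraMap k ℓ b * i := by
  haveI : FiniteDimensional k ℓ := .of_finrank_eq_succ hquad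
  have hind : LinearIndependent k ![(1 : ℓ), i] := by
    rw [LinearIndependent.pair_iff]
    intro s t hst
    refine indep_aux i hi (a := s) (b := t) ?_
    rw [Algebra.smul_def, mul_one, Algebra.smul_def] at hst
    exact hst
  have hrange : Set.range ![(1 : ℓ), i] = {(1 : ℓ), i} := by
    ext z
    constructor
    · rintro ⟨j, rfl⟩
      fin_cases j <;> simp
    · rintro (rfl | rfl)
      · exact ⟨0, rfl⟩
      · exact ⟨1, rfl⟩
  have hsp : Submodule.span k ({(1 : ℓ), i} : Set ℓ) = ⊤ := by
    apply Submodule.eq_top_of_finrank_eq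
    rw [hquad, ← hrange]
    simpa using finrank_span_eq_card hind
  have hz : z ∈ Submodule.span k ({(1 : ℓ), i} : Set ℓ) := by rw [hsp]; trivial
  obtain ⟨a, b, hab⟩ := Submodule.mem_span_pair.1 hz
  refine ⟨a, b, ?_⟩
  rw [← hab, Algebra.smul_def, mul_one, Algebra.smul_def]

/-- The nontrivial automorphism sends `i` to `-i`. -/
lemma sigma_i_aux (hquad : finrank k ℓ = 2) (i : ℓ) (hi : i ^ 2 = -1)
    (σ : ℓ ≃ₐ[k] ℓ) (hσ : ∃ x : ℓ, σ x ≠ x) : σ i = -i := by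
  have h2 : σ i ^ 2 = -1 := by rw [← map_pow, hi, map_neg, map_one]
  have h0 : (σ i - i) * (σ i + i) = 0 := by linear_combination h2 - hi
  rcases mul_eq_zero.1 h0 with h | h
  · exfalso
    have hii : σ i = i := sub_eq_zero.1 h
    obtain ⟨x, hx⟩ := hσ
    obtain ⟨a, b, rfl⟩ := repr_aux hquad i hi x
    apply hx
    rw [map_add, map_mul, σ.commutes, σ.commutes, hii]
  · exact eq_neg_of_add_eq_zero_left h

lemma sigma_repr_aux (i : ℓ) (σ : ℓ ≃ₐ[k] ℓ) (hσi : σ i = -i) (a b : k) :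
    σ (algebraMap k ℓ a + algebraMap k ℓ b * i)
      = algebraMap k ℓ a - algebraMap k ℓ b * i := by
  rw [map_add, map_mul, σ.commutes, σ.commutes, hσi, mul_neg, ← sub_eq_add_neg]

/-- Norm formula. -/
lemma norm_aux (i : ℓ) (hi : i ^ 2 = -1) (σ : ℓ ≃ₐ[k] ℓ) (hσi : σ i = -i) (a b : k) :
    (algebraMap k ℓ a + algebraMap k ℓ b * i)
        * σ (algebraMap k ℓ a + algebraMap k ℓ b * i)
      = algebraMap k ℓ (a ^ 2 + b ^ 2) := by
  rw [sigma_repr_aux i σ hσi, map_add, map_pow, map_pow]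
  linear_combination (-(algebraMap k ℓ b) ^ 2) * hi

/-- Explicit formula for `q_c` in coordinates. -/
lemma qc_formula (i : ℓ) (hi : i ^ 2 = -1) (σ : ℓ ≃ₐ[k] ℓ) (hσi : σ i = -i)
    (c : k × k × k) (a b u v : k) :
    qc σ c (algebraMap k ℓ a + algebraMap k ℓ b * i)
        (algebraMap k ℓ u + algebraMap k ℓ v * i)
      = algebraMap k ℓ ((1 - c.1) * (a ^ 2 - b ^ 2) + c.1 * (a ^ 2 + b ^ 2)
          - c.2.1 * (u ^ 2 - v ^ 2) - c.2.2 * (u ^ 2 + v ^ 2))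
        + algebraMap k ℓ (2 * (1 - c.1) * a * b - 2 * c.2.1 * u * v) * i := by
  rw [qc, sigma_repr_aux i σ hσi, sigma_repr_aux i σ hσi]
  simp only [map_add, map_sub, map_mul, map_pow, map_one, map_ofNat]
  linear_combination ((1 - 2 * algebraMap k ℓ c.1) * (algebraMap k ℓ b) ^ 2
    + (algebraMap k ℓ c.2.2 - algebraMap k ℓ c.2.1) * (algebraMap k ℓ v) ^ 2) * hi

/-- In any quadratic extension of a square-ordered field there is a square root of `-1`. -/
lemma exists_sqrt_neg_one (hsq : ∀ x : k, 0 ≤ x → IsSquare x)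
    (L : Type) [Field L] [Algebra k L] (h2 : finrank k L = 2) :
    ∃ γ : L, γ ^ 2 = -1 := by
  haveI : FiniteDimensional k L := .of_finrank_eq_succ h2
  have hbt : (⊥ : Subalgebra k L) ≠ ⊤ := by
    intro hbot
    rw [Subalgebra.bot_eq_top_iff_finrank_eq_one] at hbot
    omega
  obtain ⟨α, hα⟩ : ∃ α : L, α ∉ Set.range (algebraMap k L) := by
    by_contra hc
    push_neg at hc
    apply hbt
    ext x
    simp [Algebra.mem_bot, hc x]
  have hint : IsIntegral k α := IsIntegral.of_finite k α
  have hmon : (minpoly k α).Monic := minpoly.monic hint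
  have hdle : (minpoly k α).natDegree ≤ 2 := h2 ▸ minpoly.natDegree_le α
  have hdpos : 0 < (minpoly k α).natDegree := minpoly.natDegree_pos hint
  have haev : Polynomial.aeval α (minpoly k α) = 0 := minpoly.aeval k α
  have hexp := Polynomial.aeval_eq_sum_range (p := minpoly k α) α
  rw [haev] at hexp
  have hd : (minpoly k α).natDegree = 1 ∨ (minpoly k α).natDegree = 2 := by omega
  rcases hd with hd | hd
  · exfalso
    rw [hd] at hexp
    have hc1 : (minpoly k α).coeff 1 = 1 := by
      conv_lhs => rw [show (1 : ℕ) = (minpoly k α).natDegree from hd.symm]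
      exact hmon.coeff_natDegree
    rw [Finset.sum_range_succ, Finset.sum_range_one, hc1] at hexp
    apply hα
    refine ⟨-((minpoly k α).coeff 0), ?_⟩
    have : (0 : L) = algebraMap k L ((minpoly k α).coeff 0) + α := by
      simpa [Algebra.smul_def] using hexp
    rw [map_neg]
    linear_combination this
  · rw [hd] at hexp
    rw [Finset.sum_range_succ, Finset.sum_range_succ, Finset.sum_range_one] at hexp
    have hc2 : (minpoly k α).coeff 2 = 1 := by
      conv_lhs => rw [show (2 : ℕ) = (minpoly k α).natDegree from hd.symm]
      exact hmon.coeff_natDegree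
    rw [hc2] at hexp
    set c0 := (minpoly k α).coeff 0 with hc0
    set c1 := (minpoly k α).coeff 1 with hc1
    have heq : α ^ 2 + algebraMap k L c1 * α + algebraMap k L c0 = 0 := by
      simp only [Algebra.smul_def, map_one, pow_zero, mul_one, pow_one, one_mul] at hexp
      linear_combination -hexp
    have h2L : (2 : L) ≠ 0 := by
      intro h
      have h20 : algebraMap k L 2 = algebraMap k L 0 := by rw [map_ofNat, map_zero, h]
      exact two_ne_zero ((algebraMap k L).injective h20)
    set β : L := 2 * α + algebraMap k L c1 with hβdef
    set w : k := c1 ^ 2 - 4 * c0 with hwdef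
    have hβ2 : β ^ 2 = algebraMap k L w := by
      simp only [hβdef, hwdef, map_sub, map_mul, map_pow, map_ofNat]
      linear_combination (4 : L) * heq
    have hβr : β ∉ Set.range (algebraMap k L) := by
      rintro ⟨r, hr⟩
      apply hα
      refine ⟨(r - c1) / 2, ?_⟩
      have hcancel : (2 : L) * algebraMap k L ((r - c1) / 2) = (2 : L) * α := by
        rw [map_div₀, map_sub, map_ofNat]
        field_simp
        linear_combination hr + hβdef
      exact mul_left_cancel₀ h2L hcancel
    have hw : w < 0 := by
      by_contra hcon
      push_neg at hcon
      obtain ⟨s, hs⟩ := hsq w hcon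
      have hws : algebraMap k L w = algebraMap k L s * algebraMap k L s := by
        rw [hs, map_mul]
      have hprod : (β - algebraMap k L s) * (β + algebraMap k L s) = 0 := by
        linear_combination hβ2 + hws
      rcases mul_eq_zero.1 hprod with h | h
      · exact hβr ⟨s, (sub_eq_zero.1 h).symm⟩
      · refine hβr ⟨-s, ?_⟩
        rw [map_neg, ← eq_neg_of_add_eq_zero_left h]
    obtain ⟨t, ht⟩ := hsq (-w) (by linarith)
    have ht0 : t ≠ 0 := by
      rintro rfl
      rw [mul_zero] at ht
      linarith
    have hT : algebraMap k L t ≠ 0 := fun h =>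
      ht0 ((algebraMap k L).injective (by rw [h, map_zero]))
    refine ⟨β / algebraMap k L t, ?_⟩
    rw [div_pow, hβ2, ← map_pow, ← map_div₀]
    have hwt : w / t ^ 2 = -1 := by
      rw [div_eq_iff (pow_ne_zero 2 ht0)]
      linear_combination -ht
    rw [hwt, map_neg, map_one]

/-- Any quadratic extension containing a square root of `-1` is `k`-isomorphic to
`AdjoinRoot (X² + 1)`. -/
lemma adjoinRoot_equiv (hneg : ∀ b : k, b ^ 2 ≠ (-1 : k))
    (M : Type) [Field M] [Algebra k M] (hM : finrank k M = 2) (m : M) (hm : m ^ 2 = -1) :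
    Nonempty ((AdjoinRoot (Polynomial.X ^ 2 - Polynomial.C (-1 : k))) ≃ₐ[k] M) := by
  have hirr : Irreducible (Polynomial.X ^ 2 - Polynomial.C (-1 : k)) :=
    X_pow_sub_C_irreducible_of_prime Nat.prime_two hneg
  haveI := Fact.mk hirr
  have hq0 : (Polynomial.X ^ 2 - Polynomial.C (-1 : k)) ≠ 0 := hirr.ne_zero
  have hfr : finrank k (AdjoinRoot (Polynomial.X ^ 2 - Polynomial.C (-1 : k))) = 2 := by
    rw [(AdjoinRoot.powerBasis hq0).finrank, AdjoinRoot.powerBasis_dim,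
      Polynomial.natDegree_X_pow_sub_C]
  haveI : FiniteDimensional k (AdjoinRoot (Polynomial.X ^ 2 - Polynomial.C (-1 : k))) :=
    .of_finrank_eq_succ hfr
  haveI : FiniteDimensional k M := .of_finrank_eq_succ hM
  have hev : Polynomial.aeval m (Polynomial.X ^ 2 - Polynomial.C (-1 : k)) = 0 := by
    simp [hm]
  let f := AdjoinRoot.liftAlgHom (Polynomial.X ^ 2 - Polynomial.C (-1 : k)) (Algebra.ofId k M) m hev
  have hinj : Function.Injective f := f.toRingHom.injective
  have hsurj : Function.Surjective f :=
    (LinearMap.injective_iff_surjective_of_finrank_eq_finrank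
      (by rw [hfr, hM]) (f := f.toLinearMap)).1 hinj
  exact ⟨AlgEquiv.ofBijective f ⟨hinj, hsurj⟩⟩

/-- The group of squares has index 2. -/
lemma index_two (hsq : ∀ x : k, 0 ≤ x → IsSquare x) :
    ((powMonoidHom 2 : kˣ →* kˣ).range).index = 2 := by
  have hmem : ∀ b : kˣ, b ∈ (powMonoidHom 2 : kˣ →* kˣ).range ↔ (0 : k) < (b : k) := by
    intro b
    constructor
    · rintro ⟨u, rfl⟩
      have hval : ((powMonoidHom 2 u : kˣ) : k) = (u : k) ^ 2 := rfl
      rw [hval]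
      exact lt_of_le_of_ne (sq_nonneg _) (Ne.symm (pow_ne_zero 2 u.ne_zero))
    · intro hb
      obtain ⟨s, hs⟩ := hsq b hb.le
      have hs0 : s ≠ 0 := by
        rintro rfl
        rw [mul_zero] at hs
        exact hb.ne' hs
      refine ⟨Units.mk0 s hs0, Units.ext ?_⟩
      have : ((powMonoidHom 2 (Units.mk0 s hs0) : kˣ) : k) = s ^ 2 := rfl
      rw [this, sq, ← hs]
  rw [Subgroup.index_eq_two_iff]
  refine ⟨-1, fun b => ?_⟩
  have hb0 : (b : k) ≠ 0 := b.ne_zero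
  have hval : ((b * -1 : kˣ) : k) = -(b : k) := by simp
  rcases lt_or_gt_of_ne hb0 with hb | hb
  · left
    constructor
    · rw [hmem, hval]; linarith
    · rw [hmem]; linarith
  · right
    constructor
    · rw [hmem]; exact hb
    · rw [hmem, hval]; intro h; linarith

end Aux

set_option maxHeartbeats 1000000 in
/-- Let `k` be a square-ordered field (an ordered field in which every
non-negative element is a square), and let `ℓ = k(√−1)` (a quadratic extension of `k`
containing a square root `i` of `−1`) with nontrivial `k`-automorphism `σ`. Then:
(i) `k*/(k*)²` has order 2, and every quadratic field extension of `k` is isomorphic to `ℓ`;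
(ii) the norm map `ℓ* → k*` is not surjective, and `−1` is not a norm `x·σ(x)`;
(iii) a triple `c = (c₁, c₂, c₃) ∈ k³` is `ℓ`-admissible iff `c₁ > 1/2` and `c₃ < c₂ < −c₃`. -/
theorem square_ordered_classification [Field k] [LinearOrder k] [IsStrictOrderedRing k]
    (hsq : ∀ x : k, 0 ≤ x → IsSquare x)
    (ℓ : Type) [Field ℓ] [Algebra k ℓ] (hquad : finrank k ℓ = 2)
    (i : ℓ) (hi : i ^ 2 = -1)
    (σ : ℓ ≃ₐ[k] ℓ) (hσ : ∃ x : ℓ, σ x ≠ x) :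
    -- (i)
    (((powMonoidHom 2 : kˣ →* kˣ).range).index = 2 ∧
     ∀ (L : Type) [Field L] [Algebra k L], finrank k L = 2 → Nonempty (L ≃ₐ[k] ℓ)) ∧
    -- (ii)
    ((¬ ∀ t : k, t ≠ 0 → ∃ x : ℓ, x * σ x = algebraMap k ℓ t) ∧
     ∀ x : ℓ, x * σ x ≠ -1) ∧
    -- (iii)
    (∀ c : k × k × k, IsAdmissibleTriple σ c ↔
      (1 / 2 < c.1 ∧ c.2.2 < c.2.1 ∧ c.2.1 < -c.2.2)) := by
  have hneg : ∀ b : k, b ^ 2 ≠ (-1 : k) := fun b h => by nlinarith [sq_nonneg b]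
  have hσi : σ i = -i := sigma_i_aux hquad i hi σ hσ
  have hnorm_neg : ∀ x : ℓ, x * σ x ≠ -1 := by
    intro x hx
    obtain ⟨a, b, rfl⟩ := repr_aux hquad i hi x
    rw [norm_aux i hi σ hσi] at hx
    have : algebraMap k ℓ (a ^ 2 + b ^ 2) = algebraMap k ℓ (-1) := by
      rw [hx, map_neg, map_one]
    have hk : a ^ 2 + b ^ 2 = -1 := (algebraMap k ℓ).injective this
    nlinarith [sq_nonneg a, sq_nonneg b]
  refine ⟨⟨index_two hsq, ?_⟩, ⟨?_, hnorm_neg⟩, ?_⟩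
  · -- every quadratic extension is iso to ℓ
    intro L _ _ hL
    obtain ⟨γ, hγ⟩ := exists_sqrt_neg_one hsq L hL
    obtain ⟨e1⟩ := adjoinRoot_equiv hneg L hL γ hγ
    obtain ⟨e2⟩ := adjoinRoot_equiv hneg ℓ hquad i hi
    exact ⟨e1.symm.trans e2⟩
  · -- norm not surjective
    intro hsurj
    obtain ⟨x, hx⟩ := hsurj (-1) (by norm_num)
    rw [map_neg, map_one] at hx
    exact hnorm_neg x hx
  · -- (iii)
    intro c
    constructor
    · intro hadm
      have h3 : c.2.1 < -c.2.2 := by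
        by_contra hcon
        push_neg at hcon
        obtain ⟨s, hs⟩ := hsq (c.2.1 + c.2.2) (by linarith)
        have h0 := qc_formula i hi σ hσi c s 0 1 0
        have hz : qc σ c (algebraMap k ℓ s + algebraMap k ℓ 0 * i)
            (algebraMap k ℓ 1 + algebraMap k ℓ 0 * i) = 0 := by
          rw [h0]
          have e1 : ((1 - c.1) * (s ^ 2 - 0 ^ 2) + c.1 * (s ^ 2 + 0 ^ 2)
              - c.2.1 * (1 ^ 2 - 0 ^ 2) - c.2.2 * (1 ^ 2 + 0 ^ 2)) = (0 : k) := by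
            linear_combination -hs
          have e2 : (2 * (1 - c.1) * s * 0 - 2 * c.2.1 * 1 * 0) = (0 : k) := by ring
          rw [e1, e2, map_zero]
          simp
        have := (hadm _ _ hz).2
        simp at this
      have h2 : c.2.2 < c.2.1 := by
        by_contra hcon
        push_neg at hcon
        obtain ⟨s, hs⟩ := hsq (c.2.2 - c.2.1) (by linarith)
        have h0 := qc_formula i hi σ hσi c s 0 0 1
        have hz : qc σ c (algebraMap k ℓ s + algebraMap k ℓ 0 * i)
            (algebraMap k ℓ 0 + algebraMap k ℓ 1 * i) = 0 := by
          rw [h0]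
          have e1 : ((1 - c.1) * (s ^ 2 - 0 ^ 2) + c.1 * (s ^ 2 + 0 ^ 2)
              - c.2.1 * (0 ^ 2 - 1 ^ 2) - c.2.2 * (0 ^ 2 + 1 ^ 2)) = (0 : k) := by
            linear_combination -hs
          have e2 : (2 * (1 - c.1) * s * 0 - 2 * c.2.1 * 0 * 1) = (0 : k) := by ring
          rw [e1, e2, map_zero]
          simp
        have hy := (hadm _ _ hz).2
        rw [map_zero, map_one, zero_add, one_mul] at hy
        rw [hy] at hi
        norm_num at hi
      have h1 : 1 / 2 < c.1 := by
        by_contra hcon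
        push_neg at hcon
        have hden : c.2.1 + c.2.2 < 0 := by linarith
        have hne : c.2.1 + c.2.2 ≠ 0 := ne_of_lt hden
        have hratio : 0 ≤ (2 * c.1 - 1) / (c.2.1 + c.2.2) :=
          div_nonneg_iff.2 (Or.inr ⟨by linarith, by linarith⟩)
        obtain ⟨s, hs⟩ := hsq _ hratio
        have hkey : (c.2.1 + c.2.2) * (s * s) = 2 * c.1 - 1 := by
          rw [← hs, mul_comm]
          exact div_mul_cancel₀ _ hne
        have h0 := qc_formula i hi σ hσi c 0 1 s 0
        have hz : qc σ c (algebraMap k ℓ 0 + algebraMap k ℓ 1 * i)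
            (algebraMap k ℓ s + algebraMap k ℓ 0 * i) = 0 := by
          rw [h0]
          have e1 : ((1 - c.1) * (0 ^ 2 - 1 ^ 2) + c.1 * (0 ^ 2 + 1 ^ 2)
              - c.2.1 * (s ^ 2 - 0 ^ 2) - c.2.2 * (s ^ 2 + 0 ^ 2)) = (0 : k) := by
            linear_combination -hkey
          have e2 : (2 * (1 - c.1) * 0 * 1 - 2 * c.2.1 * s * 0) = (0 : k) := by ring
          rw [e1, e2, map_zero]
          simp
        have hx := (hadm _ _ hz).1
        rw [map_zero, map_one, zero_add, one_mul] at hx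
        rw [hx] at hi
        norm_num at hi
      exact ⟨h1, h2, h3⟩
    · rintro ⟨h1, h2, h3⟩ x y hxy
      obtain ⟨a, b, rfl⟩ := repr_aux hquad i hi x
      obtain ⟨u, v, rfl⟩ := repr_aux hquad i hi y
      rw [qc_formula i hi σ hσi] at hxy
      obtain ⟨hR, hI⟩ := indep_aux i hi hxy
      have H1 : (0 : k) < 2 * c.1 - 1 := by linarith
      have H2 : (0 : k) < -c.2.2 - c.2.1 := by linarith
      have H3 : (0 : k) < c.2.1 - c.2.2 := by linarith
      have key1 := mul_nonneg H1.le (sq_nonneg b)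
      have key2 := mul_nonneg H2.le (sq_nonneg u)
      have key3 := mul_nonneg H3.le (sq_nonneg v)
      have hR' : a ^ 2 + (2 * c.1 - 1) * b ^ 2 + (-c.2.2 - c.2.1) * u ^ 2
          + (c.2.1 - c.2.2) * v ^ 2 = 0 := by linear_combination hR
      have ha : a = 0 := by
        have h : a ^ 2 ≤ 0 := by linarith [key1, key2, key3]
        exact pow_eq_zero_iff two_ne_zero |>.1 (le_antisymm h (sq_nonneg a))
      have hb : b = 0 := by
        have hmul : (2 * c.1 - 1) * b ^ 2 ≤ 0 := by
          linarith [hR', sq_nonneg a, key2, key3]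
        have h : b ^ 2 ≤ 0 := by
          by_contra hpos
          push_neg at hpos
          exact absurd (mul_pos H1 hpos) (not_lt.2 hmul)
        exact pow_eq_zero_iff two_ne_zero |>.1 (le_antisymm h (sq_nonneg b))
      have hu : u = 0 := by
        have hmul : (-c.2.2 - c.2.1) * u ^ 2 ≤ 0 := by
          linarith [hR', sq_nonneg a, key1, key3]
        have h : u ^ 2 ≤ 0 := by
          by_contra hpos
          push_neg at hpos
          exact absurd (mul_pos H2 hpos) (not_lt.2 hmul)
        exact pow_eq_zero_iff two_ne_zero |>.1 (le_antisymm h (sq_nonneg u))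
      have hv : v = 0 := by
        have hmul : (c.2.1 - c.2.2) * v ^ 2 ≤ 0 := by
          linarith [hR', sq_nonneg a, key1, key2]
        have h : v ^ 2 ≤ 0 := by
          by_contra hpos
          push_neg at hpos
          exact absurd (mul_pos H3 hpos) (not_lt.2 hmul)
        exact pow_eq_zero_iff two_ne_zero |>.1 (le_antisymm h (sq_nonneg v))
      subst ha hb hu hv
      simp
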